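/- Let λ be a real algebraic number. For every ε > 0 there exists N such that for all n ≥ N, the number of distinct real values of the form ∑_{k=0}^{n−1} ε_k λ^k with ε_k ∈ {0,1} is at most e^{εn} · M(λ)^n, where M(λ) is the Mahler measure of λ. -/

import Mathlib

open MeasureTheory Filter

/-- Shannon entropy of the pushforward of the weights `p` under the map `f`:
`H = -∑_y q({y}) log q({y})` where `q` is the image of `p` under `f`. -/
noncomputable def mapEntropy {ι S : Type*} [Fintype ι] (p : ι → ℝ) (f : ι → S) : ℝ :=
  letI := Classical.decEq S
  ∑ s ∈ Finset.univ.image f,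
    Real.negMulLog (∑ i ∈ Finset.univ.filter (fun i => f i = s), p i)

/-- Composition `φ_{a 0} ∘ ⋯ ∘ φ_{a (k-1)}` of the maps of an IFS. -/
def compIFS {Λ : Type*} (φ : Λ → ℝ → ℝ) {k : ℕ} (a : Fin k → Λ) : ℝ → ℝ :=
  (List.ofFn fun j => φ (a j)).foldr (· ∘ ·) id

/-- The IFS `φ` has exact overlaps: two distinct words of equal length give
the same composition. -/
def HasExactOverlaps {Λ : Type*} (φ : Λ → ℝ → ℝ) : Prop :=
  ∃ (k : ℕ) (a b : Fin k → Λ), 1 ≤ k ∧ a ≠ b ∧ compIFS φ a = compIFS φ b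

/-- `μ` is exact dimensional with dimension `α`:
for `μ`-a.e. `x`, `log μ([x-r,x+r]) / log r → α` as `r → 0+`. -/
def ExactDimensional (μ : Measure ℝ) (α : ℝ) : Prop :=
  ∀ᵐ x ∂μ, Tendsto
    (fun r : ℝ => Real.log (μ (Set.Icc (x - r) (x + r))).toReal / Real.log r)
    (nhdsWithin 0 (Set.Ioi 0)) (nhds α)

/-- `H_N(Φ,p)`: Shannon entropy of the pushforward of `p^{⊗N}` under
`(i_1,…,i_N) ↦ φ_{i_1} ∘ ⋯ ∘ φ_{i_N}`. -/
noncomputable def iterEntropy {Λ : Type*} [Fintype Λ] (φ : Λ → ℝ → ℝ) (p : Λ → ℝ) (N : ℕ) : ℝ :=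
  mapEntropy (fun i : Fin N → Λ => ∏ k, p (i k)) (fun i => compIFS φ i)

/-- `H_N(λ)`: Shannon entropy of the distribution of `∑_{n<N} ω_n λ^n`,
`ω_n` i.i.d. uniform on `{-1,1}`. -/
noncomputable def bcEntropyN (l : ℝ) (N : ℕ) : ℝ :=
  mapEntropy (fun _ : Fin N → Bool => (1/2 : ℝ) ^ N)
    (fun ω => ∑ n : Fin N, (if ω n then (1:ℝ) else -1) * l ^ (n : ℕ))

/-- `P` is a primitive integer minimal polynomial of `l`. -/
def IsMinIntPoly (l : ℝ) (P : Polynomial ℤ) : Prop :=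
  P ≠ 0 ∧ Polynomial.aeval l P = 0 ∧ P.IsPrimitive ∧
    ∀ Q : Polynomial ℤ, Q ≠ 0 → Polynomial.aeval l Q = 0 → P.degree ≤ Q.degree

/-- Mahler measure of an integer polynomial `P = a_n (x - α_1) ⋯ (x - α_n)`:
`|a_n| ∏ max (1, |α_j|)`. -/
noncomputable def mahlerM (P : Polynomial ℤ) : ℝ :=
  |(P.leadingCoeff : ℝ)| *
    ((P.map (Int.castRingHom ℂ)).roots.map (fun z => max 1 (‖z‖))).prod

/-- `β` is a Pisot number: a real algebraic integer `β > 1` all of whose Galois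
conjugates other than `β` itself have modulus `< 1`. -/
def IsPisot (β : ℝ) : Prop :=
  1 < β ∧ IsIntegral ℤ β ∧
    ∀ z : ℂ, Polynomial.aeval z (minpoly ℚ β) = 0 → z = (β : ℂ) ∨ ‖z‖ < 1

section AuxMahler
open Polynomial

lemma core_int_prod (T P : Polynomial ℤ) (hT : T.Monic) :
    ∃ z : ℤ, (((T.map (Int.castRingHom ℂ)).roots).map
      (fun β => Polynomial.eval β (P.map (Int.castRingHom ℂ)))).prod = (z : ℂ) := by
  classical
  set Tq := T.map (Int.castRingHom ℚ) with hTq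
  have hTqm : Tq.Monic := hT.map _
  set L := Tq.SplittingField with hL
  set TL := Tq.map (algebraMap ℚ L) with hTL
  haveI : IsSplittingField ℚ L Tq := IsSplittingField.splittingField Tq
  have hsplit : (Tq.map (algebraMap ℚ L)).Splits := IsSplittingField.splits L Tq
  have hsplitid : TL.Splits := hsplit
  set PL := P.map (Int.castRingHom L) with hPL
  set u := ((TL.roots.map (fun β => PL.eval β))).prod with hu
  have hcomp : (Int.castRingHom L) = (algebraMap ℚ L).comp (Int.castRingHom ℚ) :=
    RingHom.ext_int _ _
  have hTmap : T.map (Int.castRingHom L) = TL := by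
    rw [hcomp, ← Polynomial.map_map]
  have hroot_int : ∀ β ∈ TL.roots, IsIntegral ℤ β := by
    intro β hβ
    have hβ0 : TL.eval β = 0 := (mem_roots (hTqm.map _).ne_zero).1 hβ
    refine ⟨T, hT, ?_⟩
    rw [← hTmap] at hβ0
    rwa [Polynomial.eval_map] at hβ0
  have hfix : ∀ σ : L ≃ₐ[ℚ] L, σ u = u := by
    intro σ
    have hcompσ : ((σ : L →+* L)).comp (algebraMap ℚ L) = algebraMap ℚ L := by
      ext x
      simp
    have hmapσ : TL.map (σ : L →+* L) = TL := by
      conv_lhs => rw [hTL]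
      rw [Polynomial.map_map, hcompσ]
    have hrootsσ : TL.roots.map (σ : L →+* L) = TL.roots := by
      conv_rhs => rw [← hmapσ]
      exact (hsplitid.roots_map (σ : L →+* L)).symm
    have hPLσ : PL.map (σ : L →+* L) = PL := by
      have : ((σ : L →+* L)).comp (Int.castRingHom L) = Int.castRingHom L :=
        RingHom.ext_int _ _
      rw [hPL, Polynomial.map_map, this]
    calc (σ : L →+* L) u
        = ((TL.roots.map (fun β => PL.eval β)).map (σ : L →+* L)).prod := by
          rw [hu]; exact map_multiset_prod (σ : L →+* L) _
      _ = ((TL.roots.map (σ : L →+* L)).map (fun β => PL.eval β)).prod := by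
          rw [Multiset.map_map, Multiset.map_map]
          congr 1
          apply Multiset.map_congr rfl
          intro β hβ
          show (σ : L →+* L) (PL.eval β) = PL.eval ((σ : L →+* L) β)
          rw [← eval₂_at_apply (σ : L →+* L) β, ← Polynomial.eval_map, hPLσ]
      _ = u := by rw [hrootsσ, hu]
  haveI : Normal ℚ L := Polynomial.SplittingField.instNormal Tq
  haveI : IsGalois ℚ L := ⟨⟩
  have hbot : u ∈ (⊥ : IntermediateField ℚ L) := by
    have h1 : u ∈ IntermediateField.fixedField (⊤ : Subgroup (L ≃ₐ[ℚ] L)) := by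
      rintro ⟨σ, -⟩
      exact hfix σ
    have h2 : IntermediateField.fixedField
        (IntermediateField.fixingSubgroup (⊥ : IntermediateField ℚ L)) = ⊥ :=
      IsGalois.fixedField_fixingSubgroup ⊥
    rw [← h2]
    intro g
    exact h1 ⟨g.1, trivial⟩
  obtain ⟨q, hq⟩ := IntermediateField.mem_bot.1 hbot
  have hint : IsIntegral ℤ u := by
    have hmem : u ∈ integralClosure ℤ L := by
      apply Subalgebra.multiset_prod_mem
      intro x hx
      obtain ⟨β, hβ, rfl⟩ := Multiset.mem_map.1 hx
      have hβi : IsIntegral ℤ β := hroot_int β hβ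
      show Polynomial.eval β PL ∈ integralClosure ℤ L
      have : Polynomial.eval β PL = Polynomial.aeval β P := by
        rw [hPL, Polynomial.eval_map]; rfl
      rw [this]
      exact adjoin_le_integralClosure hβi (Polynomial.aeval_mem_adjoin_singleton ℤ β)
    exact hmem
  have hqint : IsIntegral ℤ q := by
    rwa [← hq, isIntegral_algebraMap_iff (algebraMap ℚ L).injective] at hint
  obtain ⟨z, hz⟩ := IsIntegrallyClosed.isIntegral_iff.1 hqint
  refine ⟨z, ?_⟩
  haveI : Algebra.IsAlgebraic ℚ L := Algebra.IsAlgebraic.of_finite ℚ L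
  let ψ : L →ₐ[ℚ] ℂ := IsAlgClosed.lift
  have hψint : (ψ : L →+* ℂ).comp (Int.castRingHom L) = Int.castRingHom ℂ :=
    RingHom.ext_int _ _
  have hrootsℂ : (T.map (Int.castRingHom ℂ)).roots = TL.roots.map (ψ : L →+* ℂ) := by
    have h1 : T.map (Int.castRingHom ℂ) = TL.map (ψ : L →+* ℂ) := by
      rw [← hTmap, Polynomial.map_map, hψint]
    rw [h1]
    exact hsplitid.roots_map (ψ : L →+* ℂ)
  have hPψ : P.map (Int.castRingHom ℂ) = PL.map (ψ : L →+* ℂ) := by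
    rw [hPL, Polynomial.map_map, hψint]
  calc (((T.map (Int.castRingHom ℂ)).roots).map
      (fun β => Polynomial.eval β (P.map (Int.castRingHom ℂ)))).prod
      = ((TL.roots.map (fun β => PL.eval β)).map (ψ : L →+* ℂ)).prod := by
        rw [hrootsℂ, Multiset.map_map, Multiset.map_map]
        congr 1
        apply Multiset.map_congr rfl
        intro β hβ
        show Polynomial.eval ((ψ : L →+* ℂ) β) (P.map (Int.castRingHom ℂ))
            = (ψ : L →+* ℂ) (PL.eval β)
        rw [hPψ, ← eval₂_at_apply (ψ : L →+* ℂ) β, ← Polynomial.eval_map]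
    _ = (ψ : L →+* ℂ) u := by rw [hu]; exact (map_multiset_prod (ψ : L →+* ℂ) _).symm
    _ = (z : ℂ) := by
        rw [← hq]
        have h3 : ψ (algebraMap ℚ L q) = algebraMap ℚ ℂ q := ψ.commutes q
        show ψ (algebraMap ℚ L q) = (z : ℂ)
        rw [h3, ← hz]
        push_cast
        norm_num

lemma minpoly_struct (l : ℝ) (P : Polynomial ℤ) (hP : IsMinIntPoly l P) :
    IsIntegral ℚ l ∧ ∃ c : ℚ, c ≠ 0 ∧
      P.map (Int.castRingHom ℚ) = Polynomial.C c * minpoly ℚ l := by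
  obtain ⟨hP0, hPl, -, hmin⟩ := hP
  set Pq := P.map (Int.castRingHom ℚ) with hPq
  have hPq0 : Pq ≠ 0 := by
    intro h
    exact hP0 (Polynomial.map_injective _ (Int.cast_injective) (by simpa using h))
  have hPql : Polynomial.aeval l Pq = 0 := by
    have : (Int.castRingHom ℚ) = algebraMap ℤ ℚ := rfl
    rw [hPq, this, Polynomial.aeval_map_algebraMap]
    exact hPl
  have hint : IsIntegral ℚ l := IsAlgebraic.isIntegral ⟨Pq, hPq0, hPql⟩
  set μ := minpoly ℚ l with hμ
  have hμ0 : μ ≠ 0 := minpoly.ne_zero hint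
  have hdvd : μ ∣ Pq := minpoly.dvd ℚ l hPql
  -- integer normalization of μ
  set Q := IsLocalization.integerNormalization (nonZeroDivisors ℤ) μ with hQ
  obtain ⟨b, hb⟩ := IsLocalization.integerNormalization_map_to_map (nonZeroDivisors ℤ) μ
  rw [← hQ] at hb
  have hbne : (b : ℤ) ≠ 0 := nonZeroDivisors.coe_ne_zero b
  have hQ0 : Q ≠ 0 := by
    intro h
    rw [h, Polynomial.map_zero] at hb
    exact hμ0 (by
      have := hb.symm
      rwa [smul_eq_zero_iff_right hbne] at this)
  have hQl : Polynomial.aeval l Q = 0 :=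
    IsLocalization.integerNormalization_aeval_eq_zero (nonZeroDivisors ℤ) μ (minpoly.aeval ℚ l)
  have hdegQ : Q.degree = μ.degree := by
    have h1 : (Q.map (algebraMap ℤ ℚ)).degree = Q.degree :=
      Polynomial.degree_map_eq_of_injective (algebraMap ℤ ℚ).injective_int Q
    rw [← h1, hb, ← Int.cast_smul_eq_zsmul ℚ (b : ℤ) μ, Polynomial.smul_eq_C_mul,
      Polynomial.degree_C_mul (by exact_mod_cast hbne)]
  have hdegle : P.degree ≤ μ.degree := by
    rw [← hdegQ]
    exact hmin Q hQ0 hQl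
  have hdegPq : Pq.degree = P.degree :=
    Polynomial.degree_map_eq_of_injective (Int.castRingHom ℚ).injective_int P
  have hdegge : μ.degree ≤ Pq.degree := Polynomial.degree_le_of_dvd hdvd hPq0
  have hdeg_eq : μ.degree = Pq.degree := le_antisymm hdegge (hdegPq ▸ hdegle)
  obtain ⟨k, hk⟩ := hdvd
  have hk0 : k ≠ 0 := by
    intro h
    rw [h, mul_zero] at hk
    exact hPq0 hk
  have hkdeg : k.degree = 0 := by
    have := Polynomial.degree_mul (p := μ) (q := k)
    rw [← hk, ← hdeg_eq] at this
    rw [Polynomial.degree_eq_natDegree hμ0, Polynomial.degree_eq_natDegree hk0] at this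
    rw [Polynomial.degree_eq_natDegree hk0]
    norm_cast at this ⊢
    omega
  obtain ⟨c, rfl⟩ : ∃ c : ℚ, k = Polynomial.C c :=
    ⟨k.coeff 0, (Polynomial.eq_C_of_degree_le_zero hkdeg.le)⟩
  have hc0 : c ≠ 0 := fun h => hk0 (by rw [h, Polynomial.C_0])
  exact ⟨hint, c, hc0, by rw [hk, mul_comm]⟩

lemma root_transfer (l : ℝ) (P : Polynomial ℤ) (hP : IsMinIntPoly l P) (R : Polynomial ℤ) (β : ℂ)
    (hβP : (P.map (Int.castRingHom ℂ)).eval β = 0)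
    (hβR : (R.map (Int.castRingHom ℂ)).eval β = 0) :
    (R.map (Int.castRingHom ℝ)).eval l = 0 := by
  obtain ⟨hint, c, hc0, hfact⟩ := minpoly_struct l P hP
  have hcast : (algebraMap ℚ ℂ).comp (Int.castRingHom ℚ) = Int.castRingHom ℂ :=
    RingHom.ext_int _ _
  set μ := minpoly ℚ l with hμ
  -- μ_ℂ vanishes at β
  have hPC : P.map (Int.castRingHom ℂ) = (P.map (Int.castRingHom ℚ)).map (algebraMap ℚ ℂ) := by
    rw [Polynomial.map_map, hcast]
  have hμβ : (μ.map (algebraMap ℚ ℂ)).eval β = 0 := by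
    rw [hPC, hfact, Polynomial.map_mul, Polynomial.eval_mul, Polynomial.map_C,
      Polynomial.eval_C] at hβP
    rcases mul_eq_zero.1 hβP with h | h
    · exact absurd h (fun hh => hc0 ((_root_.map_eq_zero (algebraMap ℚ ℂ)).1 hh))
    · exact h
  set Rq := R.map (Int.castRingHom ℚ) with hRq
  have hRC : R.map (Int.castRingHom ℂ) = Rq.map (algebraMap ℚ ℂ) := by
    rw [hRq, Polynomial.map_map, hcast]
  have hdvd : μ ∣ Rq := by
    by_contra hndvd
    have hcop : IsCoprime μ Rq := ((minpoly.irreducible hint).coprime_iff_not_dvd).2 hndvd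
    have hcopC : IsCoprime (μ.map (algebraMap ℚ ℂ)) (Rq.map (algebraMap ℚ ℂ)) :=
      hcop.map (Polynomial.mapRingHom (algebraMap ℚ ℂ))
    obtain ⟨a, b, hab⟩ := hcopC
    have := congrArg (Polynomial.eval β) hab
    rw [Polynomial.eval_add, Polynomial.eval_mul, Polynomial.eval_mul, hμβ,
      ← hRC, hβR] at this
    simp at this
  obtain ⟨k, hk⟩ := hdvd
  have : Polynomial.aeval l Rq = 0 := by
    rw [hk, map_mul, minpoly.aeval, zero_mul]
  have h2 : Polynomial.aeval l Rq = Polynomial.aeval l R := by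
    rw [hRq]
    have : (Int.castRingHom ℚ) = algebraMap ℤ ℚ := rfl
    rw [this, Polynomial.aeval_map_algebraMap]
  rw [h2] at this
  rwa [Polynomial.aeval_def, ← Polynomial.eval_map] at this

lemma cnorm_mprod (m : Multiset ℂ) : ‖m.prod‖ = (m.map (fun x => ‖x‖)).prod :=
  map_multiset_prod (normHom (α := ℂ)) m

lemma sep_lemma (l : ℝ) (P : Polynomial ℤ) (hP : IsMinIntPoly l P) (n : ℕ) (hn : 1 ≤ n)
    (c : ℕ → ℤ) (hc : ∀ k, c k = 1 ∨ c k = 0 ∨ c k = -1)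
    (hval : (∑ k ∈ Finset.range n, (c k : ℝ) * l ^ k) ≠ 0) :
    max 1 |l| ^ n / ((n : ℝ) ^ (P.natDegree - 1) * mahlerM P ^ n)
      ≤ |∑ k ∈ Finset.range n, (c k : ℝ) * l ^ k| := by
  classical
  have hP0 : P ≠ 0 := hP.1
  set d := P.natDegree with hd
  set R : Polynomial ℤ := ∑ k ∈ Finset.range n, Polynomial.C (c k) * Polynomial.X ^ k with hR
  -- evaluation of R over any ℤ-algebra-like cast
  have hevalC : ∀ z : ℂ, (R.map (Int.castRingHom ℂ)).eval z
      = ∑ k ∈ Finset.range n, (c k : ℂ) * z ^ k := by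
    intro z
    rw [hR, Polynomial.map_sum, Polynomial.eval_finset_sum]
    simp
  have hevalR : (R.map (Int.castRingHom ℝ)).eval l
      = ∑ k ∈ Finset.range n, (c k : ℝ) * l ^ k := by
    rw [hR, Polynomial.map_sum, Polynomial.eval_finset_sum]
    simp
  have hR0 : R ≠ 0 := by
    intro h
    rw [h] at hevalR
    simp at hevalR
    exact hval hevalR.symm
  have hcoeff : ∀ j, R.coeff j = if j < n then c j else 0 := by
    intro j
    rw [hR, Polynomial.finset_sum_coeff]
    simp only [Polynomial.coeff_C_mul, Polynomial.coeff_X_pow, mul_ite, mul_one, mul_zero]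
    rw [Finset.sum_ite_eq (Finset.range n) j c]
    simp
  have hdegR : R.natDegree ≤ n - 1 := by
    apply Polynomial.natDegree_sum_le_of_forall_le
    intro k hk
    refine le_trans (Polynomial.natDegree_C_mul_le _ _) ?_
    simpa using Nat.le_sub_one_of_lt (Finset.mem_range.1 hk)
  have hlcmem : R.leadingCoeff = 1 ∨ R.leadingCoeff = -1 := by
    have h1 : R.leadingCoeff ≠ 0 := Polynomial.leadingCoeff_ne_zero.2 hR0
    rw [Polynomial.leadingCoeff] at h1 ⊢
    rcases hc R.natDegree with h | h | h
    · left; rw [hcoeff] at h1 ⊢; split at h1 <;> simp_all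
    · exfalso; rw [hcoeff] at h1; split at h1 <;> simp_all
    · right; rw [hcoeff] at h1 ⊢; split at h1 <;> simp_all
  set R' : Polynomial ℤ := if R.leadingCoeff = 1 then R else -R with hR'
  have hR'm : R'.Monic := by
    rw [hR']
    rcases hlcmem with h | h
    · rw [if_pos h]; exact h
    · rw [if_neg (by rw [h]; norm_num), Polynomial.Monic, Polynomial.leadingCoeff_neg, h]
      norm_num
  have hdegR' : R'.natDegree = R.natDegree := by
    rw [hR']; split <;> simp [Polynomial.natDegree_neg]
  set pC := P.map (Int.castRingHom ℂ) with hpC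
  set rC := R'.map (Int.castRingHom ℂ) with hrC
  have hpC0 : pC ≠ 0 := fun h => hP0 (Polynomial.map_injective _ Int.cast_injective (by simpa using h))
  have hrC0 : rC ≠ 0 := (hR'm.map _).ne_zero
  have hrCmonic : rC.Monic := hR'm.map _
  have habs : ∀ z : ℂ, ‖rC.eval z‖ = ‖(R.map (Int.castRingHom ℂ)).eval z‖ := by
    intro z
    rw [hrC, hR']
    split
    · rfl
    · rw [Polynomial.map_neg, Polynomial.eval_neg, norm_neg]
  -- the integer product
  obtain ⟨z, hz⟩ := core_int_prod R' P hR'm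
  have hz0 : z ≠ 0 := by
    intro h
    rw [h] at hz
    push_cast at hz
    have hmem := Multiset.prod_eq_zero_iff.1 hz
    obtain ⟨β, hβ, hw0⟩ := Multiset.mem_map.1 hmem
    have hβr : rC.eval β = 0 := (Polynomial.mem_roots hrC0).1 hβ
    have hβR : (R.map (Int.castRingHom ℂ)).eval β = 0 := by
      have := habs β
      rw [hβr] at this
      simp only [norm_zero] at this
      exact norm_eq_zero.1 this.symm
    have := root_transfer l P hP R β hw0 hβR
    rw [hevalR] at this
    exact hval this
  -- real quantities
  set A := |(P.leadingCoeff : ℝ)| with hA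
  have hA1 : 1 ≤ A := by
    rw [hA]
    have : P.leadingCoeff ≠ 0 := Polynomial.leadingCoeff_ne_zero.2 hP0
    rw [← Int.cast_abs]
    exact_mod_cast Int.one_le_abs this
  set F : ℂ → ℝ := fun α => ‖rC.eval α‖ with hF
  set G : ℂ → ℝ := fun β => ‖pC.eval β‖ with hG
  set Xr := ((pC.roots).map F).prod with hXr
  set W := ((rC.roots).map G).prod with hWdef
  have hW1 : 1 ≤ W := by
    have : W = ‖((rC.roots).map (fun β => pC.eval β)).prod‖ := by
      rw [hWdef, cnorm_mprod, Multiset.map_map]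
      rfl
    rw [this, hz, Complex.norm_intCast, ← Int.cast_abs]
    exact_mod_cast Int.one_le_abs hz0
  set m := R'.natDegree with hm
  set dd := Multiset.card pC.roots with hdd
  have hddd : dd = d := by
    rw [hdd, Polynomial.splits_iff_card_roots.1 (IsAlgClosed.splits pC), hpC,
      Polynomial.natDegree_map_eq_of_injective Int.cast_injective P]
  have hmcard : Multiset.card rC.roots = m := by
    rw [Polynomial.splits_iff_card_roots.1 (IsAlgClosed.splits rC), hrC,
      Polynomial.natDegree_map_eq_of_injective Int.cast_injective R']
  -- swap identity
  have hpfact := (IsAlgClosed.splits pC).eq_prod_roots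
  have hrfact := (IsAlgClosed.splits rC).eq_prod_roots
  have hlcpC : ‖pC.leadingCoeff‖ = A := by
    rw [hpC, Polynomial.leadingCoeff_map_of_injective Int.cast_injective P]
    simpa [hA] using Complex.norm_intCast P.leadingCoeff
  have hGeq : ∀ β : ℂ, G β = A * ((pC.roots).map (fun α => ‖β - α‖)).prod := by
    intro β
    show ‖pC.eval β‖ = _
    conv_lhs => rw [hpfact]
    rw [Polynomial.eval_mul, Polynomial.eval_C, norm_mul, hlcpC,
      Polynomial.eval_multiset_prod, Multiset.map_map, cnorm_mprod, Multiset.map_map]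
    simp
  have hFeq : ∀ α : ℂ, F α = ((rC.roots).map (fun β => ‖α - β‖)).prod := by
    intro α
    show ‖rC.eval α‖ = _
    conv_lhs => rw [hrfact]
    rw [Polynomial.eval_mul, Polynomial.eval_C, norm_mul, hrCmonic.leadingCoeff,
      Polynomial.eval_multiset_prod, Multiset.map_map, cnorm_mprod, Multiset.map_map]
    simp
  have hswap : W = A ^ m * Xr := by
    have h1 : W = A ^ m * ((rC.roots).map
        (fun β => ((pC.roots).map (fun α => ‖β - α‖)).prod)).prod := by
      rw [hWdef, Multiset.map_congr rfl (fun β _ => hGeq β), Multiset.prod_map_mul, ← hmcard]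
      congr 1
      simp [Multiset.map_const', Multiset.prod_replicate]
    have h2 : Xr = ((pC.roots).map
        (fun α => ((rC.roots).map (fun β => ‖α - β‖)).prod)).prod := by
      rw [hXr]
      exact congrArg Multiset.prod (Multiset.map_congr rfl (fun α _ => hFeq α))
    have hcomm : ((pC.roots).map
        (fun α => ((rC.roots).map (fun β => ‖α - β‖)).prod)).prod
        = ((rC.roots).map
        (fun β => ((pC.roots).map (fun α => ‖β - α‖)).prod)).prod := by
      rw [Multiset.prod_map_prod_map]
      apply congrArg Multiset.prod
      apply Multiset.map_congr rfl
      intro β _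
      apply congrArg Multiset.prod
      apply Multiset.map_congr rfl
      intro α _
      rw [← neg_sub β α, norm_neg]
    rw [h1, h2, hcomm]
  -- decompose roots of pC at l
  have hlmem : (l : ℂ) ∈ pC.roots := by
    rw [Polynomial.mem_roots hpC0]
    show pC.eval (l : ℂ) = 0
    have h1 : (P.map (Int.castRingHom ℝ)).eval l = 0 := by
      have h1' := hP.2.1
      rw [Polynomial.aeval_def, ← Polynomial.eval_map] at h1'
      exact h1'
    have hco : Complex.ofRealHom.comp (Int.castRingHom ℝ) = Int.castRingHom ℂ :=
      RingHom.ext_int _ _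
    have h2 : pC = (P.map (Int.castRingHom ℝ)).map (Complex.ofRealHom) := by
      rw [hpC, Polynomial.map_map, hco]
    rw [h2, Polynomial.eval_map]
    show Polynomial.eval₂ Complex.ofRealHom (Complex.ofRealHom l) (P.map (Int.castRingHom ℝ)) = 0
    rw [Polynomial.eval₂_at_apply, h1, map_zero]
  set rest := pC.roots.erase (l : ℂ) with hrest
  have hcons : (l : ℂ) ::ₘ rest = pC.roots := Multiset.cons_erase hlmem
  have hrestcard : Multiset.card rest = d - 1 := by
    have := congrArg Multiset.card hcons
    rw [Multiset.card_cons] at this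
    omega
  have hXsplit : Xr = F (l : ℂ) * (rest.map F).prod := by
    rw [hXr, ← hcons, Multiset.map_cons, Multiset.prod_cons]
  set Y := (rest.map F).prod with hY
  -- upper bound on Y
  set Prest := (rest.map (fun α => max 1 (‖α‖))).prod with hPrest
  have hPrest1 : 1 ≤ Prest := by
    apply Multiset.one_le_prod
    intro x hx
    obtain ⟨α, hα, rfl⟩ := Multiset.mem_map.1 hx
    exact le_max_left _ _
  have hFbound : ∀ α : ℂ, F α ≤ (n : ℝ) * max 1 (‖α‖) ^ n := by
    intro α
    show ‖rC.eval α‖ ≤ _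
    calc ‖rC.eval α‖ = ‖(R.map (Int.castRingHom ℂ)).eval α‖ := habs α
      _ = ‖∑ k ∈ Finset.range n, (c k : ℂ) * α ^ k‖ := by rw [hevalC]
      _ ≤ ∑ k ∈ Finset.range n, ‖(c k : ℂ) * α ^ k‖ :=
          norm_sum_le _ _
      _ ≤ ∑ k ∈ Finset.range n, max 1 (‖α‖) ^ n := by
          apply Finset.sum_le_sum
          intro k hk
          rw [norm_mul, norm_pow]
          have h1 : ‖(c k : ℂ)‖ ≤ 1 := by
            rcases hc k with h | h | h <;> simp [h]
          have h2 : ‖α‖ ^ k ≤ max 1 (‖α‖) ^ n :=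
            le_trans (pow_le_pow_left₀ (norm_nonneg _) (le_max_right _ _) k)
              (pow_le_pow_right₀ (le_max_left _ _) (Finset.mem_range.1 hk).le)
          calc ‖(c k : ℂ)‖ * ‖α‖ ^ k
              ≤ 1 * (max 1 (‖α‖) ^ n) :=
                mul_le_mul h1 h2 (pow_nonneg (norm_nonneg _) k) zero_le_one
            _ = max 1 (‖α‖) ^ n := one_mul _
      _ = (n : ℝ) * max 1 (‖α‖) ^ n := by
          rw [Finset.sum_const, Finset.card_range, nsmul_eq_mul]
  have hFnonneg : ∀ α : ℂ, 0 ≤ F α := fun α => norm_nonneg _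
  have hYb : Y ≤ (n : ℝ) ^ (d - 1) * Prest ^ n := by
    have h1 : Y ≤ (rest.map (fun α => (n : ℝ) * max 1 (‖α‖) ^ n)).prod := by
      rw [hY]
      apply Multiset.prod_map_le_prod_map₀
      · intro α _
        exact hFnonneg α
      · intro α _
        exact hFbound α
    refine le_trans h1 (le_of_eq ?_)
    rw [Multiset.prod_map_mul, Multiset.prod_map_pow]
    congr 1
    simp [Multiset.map_const', Multiset.prod_replicate, hrestcard]
  -- Mahler measure split
  have hM : mahlerM P = A * (max 1 |l| * Prest) := by
    show |(P.leadingCoeff : ℝ)| *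
      ((P.map (Int.castRingHom ℂ)).roots.map (fun z => max 1 (‖z‖))).prod = _
    rw [← hpC, ← hA, ← hcons, Multiset.map_cons, Multiset.prod_cons, Complex.norm_real, Real.norm_eq_abs, ← hPrest]
  -- value of F at l
  have hFl : F (l : ℂ) = |∑ k ∈ Finset.range n, (c k : ℝ) * l ^ k| := by
    rw [hF]
    show ‖rC.eval (l : ℂ)‖ = _
    rw [habs, hevalC]
    rw [show (∑ k ∈ Finset.range n, ((c k : ℂ)) * (l : ℂ) ^ k)
        = ((∑ k ∈ Finset.range n, (c k : ℝ) * l ^ k : ℝ) : ℂ) by push_cast; ring]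
    rw [Complex.norm_real, Real.norm_eq_abs]
  -- positivity and sizes
  have hApos : (0 : ℝ) < A := lt_of_lt_of_le zero_lt_one hA1
  have hmn : m ≤ n := by
    rw [hdegR']
    omega
  have hnpos : (0 : ℝ) < (n : ℝ) := by exact_mod_cast hn
  have hmaxl1 : (1 : ℝ) ≤ max 1 |l| := le_max_left _ _
  have hmaxlpos : (0 : ℝ) < max 1 |l| := lt_of_lt_of_le zero_lt_one hmaxl1
  have hPrestpos : (0 : ℝ) < Prest := lt_of_lt_of_le zero_lt_one hPrest1
  have hlow : 1 / A ^ m ≤ F (l : ℂ) * Y := by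
    rw [div_le_iff₀ (pow_pos hApos m)]
    calc (1 : ℝ) ≤ W := hW1
      _ = A ^ m * Xr := hswap
      _ = F (l : ℂ) * Y * A ^ m := by rw [hXsplit]; ring
  have hY0 : 0 ≤ Y := Multiset.prod_nonneg (by
    intro x hx
    obtain ⟨α, hα, rfl⟩ := Multiset.mem_map.1 hx
    exact hFnonneg α)
  have hYpos : 0 < Y := by
    rcases eq_or_lt_of_le hY0 with h | h
    · exfalso
      have hpos : (0 : ℝ) < 1 / A ^ m := by positivity
      rw [← h, mul_zero] at hlow
      linarith
    · exact h
  set t := max 1 |l| ^ n / ((n : ℝ) ^ (d - 1) * mahlerM P ^ n) with ht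
  have htnonneg : 0 ≤ t := by
    rw [ht, hM]
    positivity
  have hkey : t * Y ≤ F (l : ℂ) * Y := by
    calc t * Y ≤ t * ((n : ℝ) ^ (d - 1) * Prest ^ n) := mul_le_mul_of_nonneg_left hYb htnonneg
      _ = 1 / A ^ n := by
          rw [ht, hM]
          rw [mul_pow, mul_pow]
          field_simp
      _ ≤ 1 / A ^ m := by
          apply one_div_le_one_div_of_le (pow_pos hApos m)
          exact pow_le_pow_right₀ hA1 hmn
      _ ≤ F (l : ℂ) * Y := hlow
  have hkey' : Y * t ≤ Y * F (l : ℂ) := by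
    rw [mul_comm Y t, mul_comm Y (F (l : ℂ))]
    exact hkey
  have hfin : t ≤ F (l : ℂ) := le_of_mul_le_mul_left hkey' hYpos
  rw [← hFl]
  exact hfin

end AuxMahler

/-- For a real algebraic `λ`, the number of distinct values `∑_{k<n} ε_k λ^k`,
`ε_k ∈ {0,1}`, is at most `e^{εn} M(λ)^n` for all large `n`. -/
theorem stmt14 (l : ℝ) (P : Polynomial ℤ) (hP : IsMinIntPoly l P) :
    ∀ ε : ℝ, 0 < ε → ∃ N : ℕ, ∀ n : ℕ, N ≤ n →
      ((Finset.univ.image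
          (fun ω : Fin n → Bool => ∑ k : Fin n, (if ω k then (1:ℝ) else 0) * l ^ (k : ℕ))).card : ℝ)
        ≤ Real.exp (ε * n) * mahlerM P ^ n := by
  classical
  intro ε hε
  set d := P.natDegree with hd
  have hd1 : 1 ≤ d := by
    by_contra h
    have h0 : P.natDegree = 0 := by omega
    obtain ⟨a, ha⟩ := Polynomial.natDegree_eq_zero.1 h0
    have h2 := hP.2.1
    rw [← ha, Polynomial.aeval_C] at h2
    have ha0 : a = 0 := by simpa using h2
    exact hP.1 (by rw [← ha, ha0, Polynomial.C_0])
  have hA1 : (1 : ℝ) ≤ |(P.leadingCoeff : ℝ)| := by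
    have : P.leadingCoeff ≠ 0 := Polynomial.leadingCoeff_ne_zero.2 hP.1
    rw [← Int.cast_abs]
    exact_mod_cast Int.one_le_abs this
  have hProd1 : (1:ℝ) ≤ ((P.map (Int.castRingHom ℂ)).roots.map
      (fun z => max 1 (‖z‖))).prod := by
    apply Multiset.one_le_prod
    intro x hx
    obtain ⟨α, hα, rfl⟩ := Multiset.mem_map.1 hx
    exact le_max_left _ _
  have hM1 : (1 : ℝ) ≤ mahlerM P := by
    rw [mahlerM]
    calc (1:ℝ) = 1 * 1 := (one_mul 1).symm
      _ ≤ _ := mul_le_mul hA1 hProd1 zero_le_one (le_trans zero_le_one hA1)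
  have hMpos : (0:ℝ) < mahlerM P := lt_of_lt_of_le zero_lt_one hM1
  -- eventual exponential domination
  have hev : ∀ᶠ x : ℝ in atTop, 2 * x ^ d + 1 ≤ Real.exp (ε * x) := by
    have h1 : Tendsto (fun x : ℝ => (ε * x) ^ d * Real.exp (-(ε * x))) atTop (nhds 0) :=
      (Real.tendsto_pow_mul_exp_neg_atTop_nhds_zero d).comp
        (Tendsto.const_mul_atTop hε tendsto_id)
    have h2 : Tendsto (fun x : ℝ => Real.exp (-(ε * x))) atTop (nhds 0) :=
      Real.tendsto_exp_neg_atTop_nhds_zero.comp (Tendsto.const_mul_atTop hε tendsto_id)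
    have h3 : Tendsto (fun x : ℝ => (2 / ε ^ d) * ((ε * x) ^ d * Real.exp (-(ε * x)))
        + Real.exp (-(ε * x))) atTop (nhds 0) := by
      have := (h1.const_mul (2 / ε ^ d)).add h2
      simpa using this
    have h4 := h3.eventually_lt_const (by norm_num : (0:ℝ) < 1)
    filter_upwards [h4] with x hx
    have hεd : (0:ℝ) < ε ^ d := pow_pos hε d
    have heq : (2 / ε ^ d) * ((ε * x) ^ d * Real.exp (-(ε * x))) + Real.exp (-(ε * x))
        = (2 * x ^ d + 1) * Real.exp (-(ε * x)) := by
      rw [mul_pow]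
      field_simp
    rw [heq] at hx
    have h5 := mul_le_mul_of_nonneg_right hx.le (Real.exp_pos (ε * x)).le
    rw [mul_assoc, Real.exp_neg, inv_mul_cancel₀ (Real.exp_ne_zero _), mul_one, one_mul] at h5
    exact h5
  have hevN : ∀ᶠ n : ℕ in atTop, 2 * (n:ℝ) ^ d + 1 ≤ Real.exp (ε * n) :=
    tendsto_natCast_atTop_atTop.eventually hev
  obtain ⟨N, hN⟩ := eventually_atTop.1 (hevN.and (eventually_ge_atTop 1))
  refine ⟨N, fun n hn => ?_⟩
  obtain ⟨hexp, hn1⟩ := hN n hn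
  set maxl := max 1 |l| with hmaxl
  have hmaxl1 : (1:ℝ) ≤ maxl := le_max_left _ _
  have hmaxlpos : (0:ℝ) < maxl := lt_of_lt_of_le zero_lt_one hmaxl1
  have hnpos : (0:ℝ) < (n:ℝ) := by exact_mod_cast hn1
  set M := mahlerM P with hM
  set δ := maxl ^ n / ((n : ℝ) ^ (d - 1) * M ^ n) with hδ
  have hδpos : 0 < δ := by rw [hδ]; positivity
  set B := (n : ℝ) * maxl ^ n with hB
  have hBpos : 0 < B := by rw [hB]; positivity
  set f : (Fin n → Bool) → ℝ :=
    fun ω => ∑ k : Fin n, (if ω k then (1:ℝ) else 0) * l ^ (k:ℕ) with hf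
  set S := Finset.univ.image f with hS
  have habsval : ∀ ω : Fin n → Bool, |f ω| ≤ B := by
    intro ω
    show |∑ k : Fin n, (if ω k then (1:ℝ) else 0) * l ^ (k:ℕ)| ≤ B
    calc |∑ k : Fin n, (if ω k then (1:ℝ) else 0) * l ^ (k:ℕ)|
        ≤ ∑ k : Fin n, |(if ω k then (1:ℝ) else 0) * l ^ (k:ℕ)| :=
          Finset.abs_sum_le_sum_abs _ _
      _ ≤ ∑ _k : Fin n, maxl ^ n := by
          apply Finset.sum_le_sum
          intro k _
          rw [abs_mul]
          have h1 : |if ω k then (1:ℝ) else 0| ≤ 1 := by split <;> simp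
          have h2 : |l ^ (k:ℕ)| ≤ maxl ^ n := by
            rw [abs_pow]
            exact le_trans (pow_le_pow_left₀ (abs_nonneg l) (le_max_right 1 |l|) _)
              (pow_le_pow_right₀ hmaxl1 k.isLt.le)
          calc |if ω k then (1:ℝ) else 0| * |l ^ (k:ℕ)| ≤ 1 * maxl ^ n :=
                mul_le_mul h1 h2 (abs_nonneg _) zero_le_one
            _ = maxl ^ n := one_mul _
      _ = B := by
          rw [Finset.sum_const, Finset.card_univ, Fintype.card_fin, nsmul_eq_mul, hB]
  have hSB : ∀ x ∈ S, |x| ≤ B := by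
    intro x hx
    obtain ⟨ω, -, rfl⟩ := Finset.mem_image.1 hx
    exact habsval ω
  have hsep : ∀ x ∈ S, ∀ y ∈ S, x ≠ y → δ ≤ |x - y| := by
    intro x hx y hy hne
    obtain ⟨ω, -, rfl⟩ := Finset.mem_image.1 hx
    obtain ⟨ω', -, rfl⟩ := Finset.mem_image.1 hy
    set ωe : ℕ → Bool := fun k => if h : k < n then ω ⟨k, h⟩ else false with hωe
    set ωe' : ℕ → Bool := fun k => if h : k < n then ω' ⟨k, h⟩ else false with hωe'
    set c : ℕ → ℤ := fun k => (if ωe k then 1 else 0) - (if ωe' k then 1 else 0) with hcdef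
    have hc : ∀ k, c k = 1 ∨ c k = 0 ∨ c k = -1 := by
      intro k
      rw [hcdef]
      by_cases h1 : ωe k <;> by_cases h2 : ωe' k <;> norm_num [h1, h2]
    have hsum : (∑ k ∈ Finset.range n, (c k : ℝ) * l ^ k) = f ω - f ω' := by
      have hsplit : ∀ k ∈ Finset.range n, (c k : ℝ) * l ^ k
          = (if ωe k then (1:ℝ) else 0) * l ^ k - (if ωe' k then (1:ℝ) else 0) * l ^ k := by
        intro k _
        show (((if ωe k then (1:ℤ) else 0) - (if ωe' k then 1 else 0) : ℤ) : ℝ) * l ^ k = _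
        push_cast
        by_cases h1 : ωe k <;> by_cases h2 : ωe' k <;> simp [h1, h2] <;> ring
      rw [Finset.sum_congr rfl hsplit, Finset.sum_sub_distrib]
      congr 1
      · show _ = ∑ k : Fin n, (if ω k then (1:ℝ) else 0) * l ^ (k:ℕ)
        rw [← Fin.sum_univ_eq_sum_range (fun k => (if ωe k then (1:ℝ) else 0) * l ^ k) n]
        apply Finset.sum_congr rfl
        intro k _
        congr 1
        show (if ωe (k:ℕ) then (1:ℝ) else 0) = _
        rw [hωe]
        simp [k.isLt]
      · show _ = ∑ k : Fin n, (if ω' k then (1:ℝ) else 0) * l ^ (k:ℕ)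
        rw [← Fin.sum_univ_eq_sum_range (fun k => (if ωe' k then (1:ℝ) else 0) * l ^ k) n]
        apply Finset.sum_congr rfl
        intro k _
        congr 1
        show (if ωe' (k:ℕ) then (1:ℝ) else 0) = _
        rw [hωe']
        simp [k.isLt]
    have hval : (∑ k ∈ Finset.range n, (c k : ℝ) * l ^ k) ≠ 0 := by
      rw [hsum]
      exact sub_ne_zero.2 hne
    have hs := sep_lemma l P hP n hn1 c hc hval
    rw [hsum] at hs
    exact hs
  set g : ℝ → ℕ := fun x => ⌊(x + B) / δ⌋₊ with hg
  have hinj : Set.InjOn g S := by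
    intro x hx y hy hgxy
    by_contra hne
    have hd' := hsep x hx y hy hne
    have hux : 0 ≤ (x + B) / δ := div_nonneg (by linarith [(abs_le.1 (hSB x hx)).1]) hδpos.le
    have huy : 0 ≤ (y + B) / δ := div_nonneg (by linarith [(abs_le.1 (hSB y hy)).1]) hδpos.le
    have h1 : ((g x : ℝ)) ≤ (x + B)/δ := Nat.floor_le hux
    have h2 : (x + B)/δ < (g x : ℝ) + 1 := Nat.lt_floor_add_one _
    have h3 : ((g y : ℝ)) ≤ (y + B)/δ := Nat.floor_le huy
    have h4 : (y + B)/δ < (g y : ℝ) + 1 := Nat.lt_floor_add_one _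
    have hK : ((g x : ℝ)) = ((g y : ℝ)) := by exact_mod_cast congrArg (Nat.cast (R := ℝ)) hgxy
    have hab : (x + B)/δ - (y + B)/δ = (x - y)/δ := by ring
    have habs1 : |(x - y)/δ| < 1 := by
      rw [← hab, abs_lt]
      constructor <;> linarith
    have habs2 : |x - y| < δ := by
      rw [abs_div, abs_of_pos hδpos] at habs1
      exact (div_lt_one hδpos).1 habs1
    linarith
  have hcard : S.card ≤ (Finset.range (⌊2 * B / δ⌋₊ + 1)).card := by
    apply Finset.card_le_card_of_injOn g _ hinj
    intro x hx
    rw [Finset.mem_coe, Finset.mem_range, Nat.lt_succ_iff]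
    apply Nat.floor_le_floor
    have hx2 := (abs_le.1 (hSB x hx)).2
    gcongr
    linarith
  rw [Finset.card_range] at hcard
  have hchain : ((S.card : ℝ)) ≤ 2 * B / δ + 1 := by
    calc ((S.card : ℝ)) ≤ ((⌊2 * B / δ⌋₊ + 1 : ℕ) : ℝ) := by exact_mod_cast hcard
      _ ≤ 2 * B / δ + 1 := by
          have := Nat.floor_le (by positivity : (0:ℝ) ≤ 2 * B / δ)
          push_cast
          linarith
  have h2Bδ : 2 * B / δ = 2 * (n:ℝ) ^ d * M ^ n := by
    have hnd : (n:ℝ) ^ d = (n:ℝ) * (n:ℝ) ^ (d - 1) := by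
      rw [← pow_succ']
      congr 1
      omega
    rw [hB, hδ, div_div_eq_mul_div, hnd]
    have hmaxn : maxl ^ n ≠ 0 := by positivity
    field_simp
  have hMn : (1:ℝ) ≤ M ^ n := one_le_pow₀ hM1
  show ((S.card : ℝ)) ≤ Real.exp (ε * n) * M ^ n
  calc ((S.card : ℝ)) ≤ 2 * B / δ + 1 := hchain
    _ = 2 * (n:ℝ) ^ d * M ^ n + 1 := by rw [h2Bδ]
    _ ≤ 2 * (n:ℝ) ^ d * M ^ n + M ^ n := by linarith
    _ = (2 * (n:ℝ) ^ d + 1) * M ^ n := by ring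
    _ ≤ Real.exp (ε * n) * M ^ n :=
        mul_le_mul_of_nonneg_right hexp (by positivity)
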